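/- With R_NC(W^(j)) = H(W^(j-1)) + (m - dim W^(j-1))·H_N(W^(j)|W^(j-1)), one has R_NC(W^(j)) ≤ H(V) (the Slepian-Wolf sum rate), with equality if and only if j = r. -/

import Mathlib

open scoped BigOperators

open Classical in
/-- Base-2 Shannon entropy of the random variable `f` on the finite probability
space `(Ω, p)`. -/
noncomputable def mapEnt {Ω β : Type*} [Fintype Ω] [Fintype β]
    (p : Ω → ℝ) (f : Ω → β) : ℝ :=
  ∑ b : β, -((∑ ω ∈ Finset.univ.filter (fun ω => f ω = b), p ω) *
      Real.logb 2 (∑ ω ∈ Finset.univ.filter (fun ω => f ω = b), p ω))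

open Classical in
/-- Entropy of a subspace `U` of the space of `F`-valued random variables on `Ω`:
the joint entropy of the collection of all random variables in `U` (equivalently,
of any generating set). -/
noncomputable def subEnt {F Ω : Type*} [Field F] [Fintype F] [Fintype Ω]
    (p : Ω → ℝ) (U : Submodule F (Ω → F)) : ℝ :=
  mapEnt p (fun ω => (fun u : U => (u : Ω → F) ω))

/-- Normalized conditional entropy `H_N(U|W) = (H(W+U) - H(W)) / (dim(W+U) - dim W)`. -/
noncomputable def condNE {F Ω : Type*} [Field F] [Fintype F] [Fintype Ω]
    (p : Ω → ℝ) (U W : Submodule F (Ω → F)) : ℝ :=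
  (subEnt p (W ⊔ U) - subEnt p W) /
    ((Module.finrank F ↥(W ⊔ U) : ℝ) - (Module.finrank F ↥W : ℝ))

/-- `IsNEChain p V r W` says that `⊥ = W 0 ⊊ W 1 ⊊ ... ⊊ W r = V` is a strictly
increasing chain of subspaces of `V` such that for each `j`: (1) among all subspaces
of `V` strictly containing `W j`, `W (j+1)` has the least normalized conditional
entropy conditioned on `W j`, and (2) any subspace of `V` strictly containing `W j`
achieving this minimum is contained in `W (j+1)`. -/
def IsNEChain {F Ω : Type*} [Field F] [Fintype F] [Fintype Ω]
    (p : Ω → ℝ) (V : Submodule F (Ω → F)) (r : ℕ) (W : ℕ → Submodule F (Ω → F)) : Prop :=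
  W 0 = ⊥ ∧ W r = V ∧ (∀ j, j < r → W j < W (j + 1)) ∧ (∀ j, j ≤ r → W j ≤ V) ∧
  ∀ j, j < r →
    (∀ U : Submodule F (Ω → F), U ≤ V → W j < U →
        condNE p (W (j + 1)) (W j) ≤ condNE p U (W j)) ∧
    (∀ U : Submodule F (Ω → F), U ≤ V → W j < U →
        condNE p U (W j) = condNE p (W (j + 1)) (W j) → U ≤ W (j + 1))

/-- The nested-code sum rate
`R_NC(W^(j)) = H(W^(j-1)) + (m - dim W^(j-1))·H_N(W^(j)|W^(j-1))` satisfies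
`R_NC(W^(j)) ≤ H(V)` (the Slepian-Wolf sum rate), with equality if and only if `j = r`. -/
theorem stmt_13 {F Ω : Type*} [Field F] [Fintype F] [Fintype Ω]
    (p : Ω → ℝ) (hp : ∀ ω, 0 ≤ p ω) (hpsum : ∑ ω, p ω = 1)
    {m : ℕ} (X : Fin m → (Ω → F)) (hX : LinearIndependent F X)
    (V : Submodule F (Ω → F)) (hV : V = Submodule.span F (Set.range X))
    (r : ℕ) (W : ℕ → Submodule F (Ω → F)) (hchain : IsNEChain p V r W)
    (j : ℕ) (hj1 : 1 ≤ j) (hjr : j ≤ r) :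
    subEnt p (W (j - 1))
        + ((m : ℝ) - (Module.finrank F ↥(W (j - 1)) : ℝ)) * condNE p (W j) (W (j - 1))
      ≤ subEnt p V ∧
    (subEnt p (W (j - 1))
        + ((m : ℝ) - (Module.finrank F ↥(W (j - 1)) : ℝ)) * condNE p (W j) (W (j - 1))
      = subEnt p V ↔ j = r) := by
  classical
  obtain ⟨hW0, hWr, hlt, hle, hopt⟩ := hchain
  obtain ⟨i, rfl⟩ : ∃ i, j = i + 1 := ⟨j - 1, (Nat.succ_pred_eq_of_pos hj1).symm⟩
  simp only [Nat.add_sub_cancel]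
  have hdlt : ∀ ℓ, ℓ < r → Module.finrank F ↥(W ℓ) < Module.finrank F ↥(W (ℓ+1)) :=
    fun ℓ hℓ => Submodule.finrank_lt_finrank_of_lt (hlt ℓ hℓ)
  have hWmono : ∀ a b : ℕ, a ≤ b → b ≤ r → W a ≤ W b := by
    intro a b hab hbr
    induction b with
    | zero =>
      have : a = 0 := Nat.le_zero.mp hab
      simp [this]
    | succ b ih =>
      rcases Nat.lt_or_ge a (b+1) with h | h
      · exact le_trans (ih (by omega) (by omega)) (le_of_lt (hlt b (by omega)))
      · have : a = b + 1 := by omega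
        simp [this]
  have hm : Module.finrank F ↥V = m := by
    rw [hV, finrank_span_eq_card hX, Fintype.card_fin]
  have hcond : ∀ a b : ℕ, W a ≤ W b →
      condNE p (W b) (W a) =
        (subEnt p (W b) - subEnt p (W a)) /
          ((Module.finrank F ↥(W b) : ℝ) - (Module.finrank F ↥(W a) : ℝ)) := by
    intro a b h
    unfold condNE
    rw [sup_eq_right.mpr h]
  have hstep : ∀ ℓ, ℓ < r →
      subEnt p (W (ℓ+1)) = subEnt p (W ℓ) +
        ((Module.finrank F ↥(W (ℓ+1)) : ℝ) - (Module.finrank F ↥(W ℓ) : ℝ)) *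
          condNE p (W (ℓ+1)) (W ℓ) := by
    intro ℓ hℓ
    have hd : (Module.finrank F ↥(W ℓ) : ℝ) < (Module.finrank F ↥(W (ℓ+1)) : ℝ) := by
      exact_mod_cast hdlt ℓ hℓ
    have hne : (Module.finrank F ↥(W (ℓ+1)) : ℝ) - (Module.finrank F ↥(W ℓ) : ℝ) ≠ 0 :=
      ne_of_gt (sub_pos.mpr hd)
    rw [hcond ℓ (ℓ+1) (le_of_lt (hlt ℓ hℓ))]
    field_simp
    ring
  have hmono : ∀ ℓ, ℓ + 1 < r →
      condNE p (W (ℓ+1)) (W ℓ) < condNE p (W (ℓ+2)) (W (ℓ+1)) := by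
    intro ℓ hℓ
    by_contra hcontra
    push_neg at hcontra
    have h01 : W ℓ < W (ℓ+1) := hlt ℓ (by omega)
    have h12 : W (ℓ+1) < W (ℓ+2) := hlt (ℓ+1) hℓ
    have h02 : W ℓ < W (ℓ+2) := lt_trans h01 h12
    have hUV : W (ℓ+2) ≤ V := hle (ℓ+2) (by omega)
    have hmin := (hopt ℓ (by omega)).1 (W (ℓ+2)) hUV h02
    have hmax := (hopt ℓ (by omega)).2 (W (ℓ+2)) hUV h02
    have e1 := hcond ℓ (ℓ+1) (le_of_lt h01)
    have e2 := hcond (ℓ+1) (ℓ+2) (le_of_lt h12)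
    have e3 := hcond ℓ (ℓ+2) (le_of_lt h02)
    set A := subEnt p (W ℓ) with hA
    set B := subEnt p (W (ℓ+1)) with hB
    set C := subEnt p (W (ℓ+2)) with hC
    set a := (Module.finrank F ↥(W ℓ) : ℝ) with ha
    set b := (Module.finrank F ↥(W (ℓ+1)) : ℝ) with hb
    set c := (Module.finrank F ↥(W (ℓ+2)) : ℝ) with hc
    have hba : (0:ℝ) < b - a := by
      have : a < b := by rw [ha, hb]; exact_mod_cast hdlt ℓ (by omega)
      linarith
    have hcb : (0:ℝ) < c - b := by
      have : b < c := by rw [hb, hc]; exact_mod_cast hdlt (ℓ+1) hℓ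
      linarith
    rw [e1, e2] at hcontra
    rw [div_le_div_iff₀ hcb hba] at hcontra
    have hkey : (C - A) / (c - a) ≤ (B - A) / (b - a) := by
      rw [div_le_div_iff₀ (by linarith) hba]
      nlinarith
    rw [e1] at hmin
    rw [e3] at hmin
    have heq : condNE p (W (ℓ+2)) (W ℓ) = condNE p (W (ℓ+1)) (W ℓ) := by
      rw [e1, e3]
      exact le_antisymm hkey hmin
    exact (lt_iff_le_not_ge.mp h12).2 (hmax heq)
  have key : ∀ k (i : ℕ), i + 1 + k = r →
      (k = 0 → subEnt p (W i)
          + ((m : ℝ) - (Module.finrank F ↥(W i) : ℝ)) * condNE p (W (i+1)) (W i)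
        = subEnt p V) ∧
      (k ≠ 0 → subEnt p (W i)
          + ((m : ℝ) - (Module.finrank F ↥(W i) : ℝ)) * condNE p (W (i+1)) (W i)
        < subEnt p V) := by
    intro k
    induction k with
    | zero =>
      intro i hi
      refine ⟨fun _ => ?_, fun h => absurd rfl h⟩
      have hr : i + 1 = r := by omega
      have hWi : W (i+1) = V := by rw [hr, hWr]
      have hmfr : (m : ℝ) = (Module.finrank F ↥(W (i+1)) : ℝ) := by
        rw [hWi]; exact_mod_cast hm.symm
      have hst := hstep i (by omega)
      rw [hmfr, ← hWi]
      linarith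
    | succ k ih =>
      intro i hi
      have hir : i + 1 < r := by omega
      obtain ⟨ih1, ih2⟩ := ih (i+1) (by omega)
      have hub : subEnt p (W (i+1))
          + ((m : ℝ) - (Module.finrank F ↥(W (i+1)) : ℝ)) * condNE p (W (i+2)) (W (i+1))
          ≤ subEnt p V := by
        rcases eq_or_ne k 0 with h | h
        · exact le_of_eq (ih1 h)
        · exact le_of_lt (ih2 h)
      have hlt1 : condNE p (W (i+1)) (W i) < condNE p (W (i+2)) (W (i+1)) := hmono i hir
      have hdpos : (Module.finrank F ↥(W (i+1)) : ℝ) < m := by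
        have h1 : Module.finrank F ↥(W (i+1)) < Module.finrank F ↥(W (i+2)) := hdlt (i+1) hir
        have h2 : Module.finrank F ↥(W (i+2)) ≤ Module.finrank F ↥(W r) :=
          Submodule.finrank_mono (hWmono (i+2) r (by omega) le_rfl)
        have h3 : Module.finrank F ↥(W r) = m := by rw [hWr]; exact hm
        exact_mod_cast by omega
      have hst := hstep i (by omega)
      have hmul : ((m : ℝ) - (Module.finrank F ↥(W (i+1)) : ℝ)) * condNE p (W (i+1)) (W i)
          < ((m : ℝ) - (Module.finrank F ↥(W (i+1)) : ℝ)) * condNE p (W (i+2)) (W (i+1)) :=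
        mul_lt_mul_of_pos_left hlt1 (by linarith)
      refine ⟨fun h => absurd h (Nat.succ_ne_zero k), fun _ => ?_⟩
      nlinarith
  obtain ⟨heq, hlt'⟩ := key (r - (i+1)) i (by omega)
  rcases eq_or_ne (i+1) r with h | h
  · have he := heq (by omega)
    exact ⟨le_of_eq he, ⟨fun _ => h, fun _ => he⟩⟩
  · have hl := hlt' (by omega)
    exact ⟨le_of_lt hl, ⟨fun he => absurd he (ne_of_lt hl), fun hr => absurd hr h⟩⟩
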